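/- For a continuously differentiable function g : ℝ → ℝ with a single simple zero at x₀ (g(x₀) = 0, g'(x₀) ≠ 0, and g(x) ≠ 0 for x ≠ x₀), and any continuous compactly supported test function φ : ℝ → ℝ, the composition of the Dirac delta with g satisfies ∫ φ(x) δ(g(x)) dx = φ(x₀)/|g'(x₀)|, where the left side is interpreted as the limit lim_{ε→0} ∫ φ(x) ρ_ε(g(x)) dx for a standard mollifier family ρ_ε. -/

import Mathlib

open MeasureTheory Filter Set

/-- Composition of the Dirac delta with a function having a single simple zero:
`∫ φ(x) δ(g(x)) dx = φ(x₀)/|g'(x₀)|`, where the delta is interpreted via a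
mollifier family `ρ_ε(t) = ρ(t/ε)/ε`. -/
theorem delta_comp_simple_zero
    (ρ : ℝ → ℝ) (hρc : Continuous ρ) (hρ0 : ∀ t, 0 ≤ ρ t)
    (hρsupp : HasCompactSupport ρ) (hρint : ∫ t, ρ t = 1)
    (g : ℝ → ℝ) (hg : ContDiff ℝ 1 g) (x₀ : ℝ) (hgx₀ : g x₀ = 0)
    (hg' : deriv g x₀ ≠ 0) (hunique : ∀ x ≠ x₀, g x ≠ 0)
    (φ : ℝ → ℝ) (hφ : Continuous φ) (hφsupp : HasCompactSupport φ) :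
    Tendsto (fun ε : ℝ => ∫ x, φ x * (ρ (g x / ε) / ε))
      (nhdsWithin 0 (Ioi 0)) (nhds (φ x₀ / |deriv g x₀|)) := by
  have hgc : Continuous g := hg.continuous
  have hdc : Continuous (deriv g) := hg.continuous_deriv le_rfl
  have hdiff : ∀ x, HasDerivAt g (deriv g x) x :=
    fun x => ((hg.differentiable one_ne_zero) x).hasDerivAt
  have hstrict : HasStrictDerivAt g (deriv g x₀) x₀ :=
    hg.contDiffAt.hasStrictDerivAt one_ne_zero
  set Φ := (hstrict.hasStrictFDerivAt_equiv hg').toOpenPartialHomeomorph g with hΦdef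
  have hΦcoe : (Φ : ℝ → ℝ) = g :=
    (hstrict.hasStrictFDerivAt_equiv hg').toOpenPartialHomeomorph_coe
  have hx₀src : x₀ ∈ Φ.source :=
    (hstrict.hasStrictFDerivAt_equiv hg').mem_toOpenPartialHomeomorph_source
  -- choose δ
  have hNopen : IsOpen {x | |deriv g x - deriv g x₀| < |deriv g x₀|} :=
    isOpen_lt ((hdc.sub continuous_const).abs) continuous_const
  have hN : ({x | |deriv g x - deriv g x₀| < |deriv g x₀|} ∩ Φ.source) ∈ nhds x₀ := by
    apply Filter.inter_mem
    · exact hNopen.mem_nhds (by simp [abs_pos.2 hg'])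
    · exact Φ.open_source.mem_nhds hx₀src
  obtain ⟨r, hr, hball⟩ := Metric.mem_nhds_iff.1 hN
  set δ : ℝ := r / 2 with hδdef
  have hδ : 0 < δ := by positivity
  set J : Set ℝ := Icc (x₀ - δ) (x₀ + δ) with hJdef
  set s : Set ℝ := Ioo (x₀ - δ) (x₀ + δ) with hsdef
  have hsJ : s ⊆ J := Ioo_subset_Icc_self
  have hJball : J ⊆ Metric.ball x₀ r := by
    intro x hx
    simp only [Metric.mem_ball, Real.dist_eq]
    rw [abs_lt]
    obtain ⟨h1, h2⟩ := hx
    constructor <;> simp only [hδdef] at h1 h2 <;> linarith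
  have hJd : ∀ x ∈ J, |deriv g x - deriv g x₀| < |deriv g x₀| :=
    fun x hx => (hball (hJball hx)).1
  have hJsrc : J ⊆ Φ.source := fun x hx => (hball (hJball hx)).2
  have hJd0 : ∀ x ∈ J, deriv g x ≠ 0 := by
    intro x hx h0
    have := hJd x hx
    rw [h0, zero_sub, abs_neg] at this
    exact lt_irrefl _ this
  have hx₀J : x₀ ∈ J := ⟨by linarith, by linarith⟩
  have hx₀s : x₀ ∈ s := ⟨by linarith, by linarith⟩
  -- injectivity on J
  have hinj : InjOn g J := by
    rcases lt_or_gt_of_ne hg' with hneg | hpos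
    · have hd : ∀ x ∈ J, deriv g x < 0 := by
        intro x hx
        have h1 := hJd x hx
        rw [abs_lt, abs_of_neg hneg] at h1
        linarith [h1.1, h1.2]
      have : StrictAntiOn g J := by
        apply strictAntiOn_of_deriv_neg (convex_Icc _ _) hgc.continuousOn
        intro x hx
        rw [interior_Icc] at hx
        exact hd x (hsJ hx)
      exact this.injOn
    · have hd : ∀ x ∈ J, 0 < deriv g x := by
        intro x hx
        have h1 := hJd x hx
        rw [abs_lt, abs_of_pos hpos] at h1
        linarith [h1.1, h1.2]
      have : StrictMonoOn g J := by
        apply strictMonoOn_of_deriv_pos (convex_Icc _ _) hgc.continuousOn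
        intro x hx
        rw [interior_Icc] at hx
        exact hd x (hsJ hx)
      exact this.injOn
  have hinjs : InjOn g s := hinj.mono hsJ
  -- the pushed-forward density
  set ψ : ℝ → ℝ := fun y => φ (Φ.symm y) / |deriv g (Φ.symm y)| with hψdef
  set S : Set ℝ := g '' s with hSdef
  have hSsub : S ⊆ Φ.target := by
    rintro y ⟨x, hx, rfl⟩
    have : Φ x = g x := by rw [hΦcoe]
    rw [← this]
    exact Φ.map_source (hJsrc (hsJ hx))
  have hSopen : IsOpen S := by
    have : S = Φ '' s := by rw [hΦcoe]
    rw [this]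
    exact Φ.isOpen_image_of_subset_source isOpen_Ioo (fun x hx => hJsrc (hsJ hx))
  have h0S : (0 : ℝ) ∈ S := ⟨x₀, hx₀s, hgx₀⟩
  have hsymm : ∀ x ∈ J, Φ.symm (g x) = x := by
    intro x hx
    have : Φ x = g x := by rw [hΦcoe]
    rw [← this]
    exact Φ.left_inv (hJsrc hx)
  have hψ0 : ψ 0 = φ x₀ / |deriv g x₀| := by
    have h1 : Φ.symm 0 = x₀ := by rw [← hgx₀]; exact hsymm x₀ hx₀J
    simp [hψdef, h1]
  have hsymmS : ∀ y ∈ S, Φ.symm y ∈ s := by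
    rintro y ⟨x, hx, rfl⟩
    rw [hsymm x (hsJ hx)]
    exact hx
  have hψcont : ContinuousOn ψ S := by
    have h1 : ContinuousOn Φ.symm S := Φ.continuousOn_symm.mono hSsub
    apply ContinuousOn.div
    · exact hφ.comp_continuousOn h1
    · exact (hdc.comp_continuousOn h1).abs
    · intro y hy
      rw [abs_ne_zero]
      exact hJd0 _ (hsJ (hsymmS y hy))
  -- bounds
  obtain ⟨Cφ, hCφ'⟩ := hφ.abs.bounded_above_of_compact_support hφsupp.abs
  have hCφ : ∀ x, |φ x| ≤ Cφ := fun x => by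
    simpa [Real.norm_eq_abs, abs_abs] using hCφ' x
  have hCφ0 : 0 ≤ Cφ := le_trans (abs_nonneg _) (hCφ x₀)
  obtain ⟨z, hzJ, hzmin⟩ :=
    isCompact_Icc.exists_isMinOn ⟨x₀, hx₀J⟩ (hdc.abs.continuousOn (s := J))
  set m : ℝ := |deriv g z| with hmdef
  have hm0 : 0 < m := abs_pos.2 (hJd0 z hzJ)
  have hmle : ∀ x ∈ J, m ≤ |deriv g x| := fun x hx => hzmin hx
  have hψbd : ∀ y ∈ S, |ψ y| ≤ Cφ / m := by
    intro y hy
    have hx : Φ.symm y ∈ s := hsymmS y hy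
    simp only [hψdef, abs_div, abs_abs]
    exact div_le_div₀ hCφ0 (hCφ _) hm0 (hmle _ (hsJ hx))
  -- change of variables
  have key : ∀ ε : ℝ, ∫ x in s, φ x * (ρ (g x / ε) / ε)
      = ∫ y in S, ψ y * (ρ (y / ε) / ε) := by
    intro ε
    rw [hSdef, integral_image_eq_integral_abs_deriv_smul measurableSet_Ioo
      (fun x _ => (hdiff x).hasDerivWithinAt) hinjs (fun y => ψ y * (ρ (y / ε) / ε))]
    apply setIntegral_congr_fun measurableSet_Ioo
    intro x hx
    have h1 : Φ.symm (g x) = x := hsymm x (hsJ hx)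
    have h2 : |deriv g x| ≠ 0 := abs_ne_zero.2 (hJd0 x (hsJ hx))
    simp only [hψdef, h1, smul_eq_mul]
    field_simp [h2]
  -- bound M for the support of ρ
  obtain ⟨R, hR⟩ : ∃ R, tsupport ρ ⊆ Metric.closedBall 0 R :=
    hρsupp.isBounded.subset_closedBall 0
  set M : ℝ := max R 0 + 1 with hMdef
  have hM0 : 0 < M := by positivity
  have hMρ : ∀ t : ℝ, M ≤ |t| → ρ t = 0 := by
    intro t ht
    apply image_eq_zero_of_notMem_tsupport
    intro hmem
    have := hR hmem
    simp only [Metric.mem_closedBall, Real.dist_eq, sub_zero] at this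
    have : |t| ≤ max R 0 := le_trans this (le_max_left _ _)
    linarith
  -- lower bound m₀ for |g| away from s
  obtain ⟨m₀, hm₀0, hm₀⟩ : ∃ m₀ > 0, ∀ x ∈ tsupport φ \ s, m₀ ≤ |g x| := by
    rcases eq_empty_or_nonempty (tsupport φ \ s) with h | h
    · exact ⟨1, one_pos, by simp [h]⟩
    · obtain ⟨z', hz', hz'min⟩ :=
        (hφsupp.diff isOpen_Ioo).exists_isMinOn h (hgc.abs.continuousOn)
      refine ⟨|g z'|, ?_, fun x hx => hz'min hx⟩
      refine abs_pos.2 (hunique _ fun hzx => ?_)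
      exact hz'.2 (by rw [hzx]; exact hx₀s)
  -- localization
  have hloc : ∀ᶠ ε in nhdsWithin (0:ℝ) (Ioi 0),
      ∫ x, φ x * (ρ (g x / ε) / ε) = ∫ y in S, ψ y * (ρ (y / ε) / ε) := by
    filter_upwards [Ioo_mem_nhdsGT_of_mem (by constructor <;> [exact le_rfl; positivity] :
      (0:ℝ) ∈ Ico 0 (m₀ / M))] with ε hε
    obtain ⟨hε0, hεlt⟩ := hε
    rw [← key ε]
    rw [setIntegral_eq_integral_of_forall_compl_eq_zero]
    intro x hx
    by_cases hφx : φ x = 0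
    · simp [hφx]
    · have hxK : x ∈ tsupport φ \ s := ⟨subset_tsupport φ hφx, hx⟩
      have h1 : m₀ ≤ |g x| := hm₀ x hxK
      have h2 : ρ (g x / ε) = 0 := by
        apply hMρ
        rw [abs_div, abs_of_pos hε0, le_div_iff₀ hε0]
        have h3 : ε * M < m₀ := (lt_div_iff₀ hM0).1 hεlt
        nlinarith
      simp [h2]
  -- substitution y = ε t
  have hSmeas : MeasurableSet S := hSopen.measurableSet
  have hsub : ∀ ε ∈ Ioi (0:ℝ),
      ∫ y in S, ψ y * (ρ (y / ε) / ε) = ∫ t, S.indicator ψ (ε * t) * ρ t := by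
    intro ε hε0
    rw [mem_Ioi] at hε0
    have hFeq : ∀ t : ℝ, S.indicator (fun y => ψ y * (ρ (y / ε) / ε)) (ε * t)
        = S.indicator ψ (ε * t) * ρ t / ε := by
      intro t
      by_cases h : ε * t ∈ S
      · rw [Set.indicator_of_mem h, Set.indicator_of_mem h,
          mul_div_cancel_left₀ _ (ne_of_gt hε0)]
        ring
      · rw [Set.indicator_of_notMem h, Set.indicator_of_notMem h, zero_mul, zero_div]
    have h1 : ∫ y in S, ψ y * (ρ (y / ε) / ε)
        = ∫ y, S.indicator (fun y => ψ y * (ρ (y / ε) / ε)) y :=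
      (integral_indicator hSmeas).symm
    have h2 : ε⁻¹ • ∫ y, S.indicator (fun y => ψ y * (ρ (y / ε) / ε)) y
        = ∫ t, S.indicator ψ (ε * t) * ρ t / ε := by
      rw [← abs_of_pos (inv_pos.2 hε0), ← MeasureTheory.Measure.integral_comp_mul_left]
      exact integral_congr_ae (Filter.Eventually.of_forall hFeq)
    have h3 : (∫ t, S.indicator ψ (ε * t) * ρ t / ε)
        = (∫ t, S.indicator ψ (ε * t) * ρ t) / ε := integral_div ε _
    rw [h1]
    apply mul_left_cancel₀ (inv_ne_zero (ne_of_gt hε0))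
    rw [← smul_eq_mul, h2, h3, div_eq_mul_inv, mul_comm]
  -- dominated convergence
  have hρint' : Integrable ρ := hρc.integrable_of_hasCompactSupport hρsupp
  have hmain : Tendsto (fun ε : ℝ => ∫ t, S.indicator ψ (ε * t) * ρ t)
      (nhdsWithin 0 (Ioi 0)) (nhds (∫ t, ψ 0 * ρ t)) := by
    apply tendsto_integral_filter_of_dominated_convergence (fun t => (Cφ / m) * ρ t)
    · filter_upwards [self_mem_nhdsWithin] with ε hε
      rw [mem_Ioi] at hε
      have heq : (fun t => S.indicator ψ (ε * t)) =
          ((fun t : ℝ => ε * t) ⁻¹' S).indicator (fun t => ψ (ε * t)) := by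
        funext t
        exact (Set.indicator_comp_right (fun t : ℝ => ε * t) (s := S) (g := ψ) (x := t)).symm
      apply AEStronglyMeasurable.mul _ hρc.aestronglyMeasurable
      rw [heq]
      have hpre : MeasurableSet ((fun t : ℝ => ε * t) ⁻¹' S) :=
        (hSopen.preimage (continuous_const.mul continuous_id)).measurableSet
      refine (aestronglyMeasurable_indicator_iff hpre).mpr ?_
      exact (hψcont.comp ((continuous_const.mul continuous_id).continuousOn)
        (fun t ht => ht)).aestronglyMeasurable hpre
    · filter_upwards with ε
      filter_upwards with t
      rw [Real.norm_eq_abs, abs_mul, abs_of_nonneg (hρ0 t)]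
      apply mul_le_mul_of_nonneg_right _ (hρ0 t)
      by_cases h : ε * t ∈ S
      · rw [Set.indicator_of_mem h]; exact hψbd _ h
      · rw [Set.indicator_of_notMem h, abs_zero]; positivity
    · exact hρint'.const_mul _
    · filter_upwards with t
      have h1 : Tendsto (fun ε : ℝ => ε * t) (nhdsWithin 0 (Ioi 0)) (nhds 0) := by
        have h0 : Tendsto (fun ε : ℝ => ε * t) (nhds 0) (nhds 0) := by
          simpa using (continuous_mul_right t).tendsto (0:ℝ)
        exact h0.mono_left nhdsWithin_le_nhds
      have h2 : ∀ᶠ ε in nhdsWithin (0:ℝ) (Ioi 0), ε * t ∈ S :=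
        h1 (hSopen.mem_nhds h0S)
      have h3 : ContinuousAt ψ 0 := hψcont.continuousAt (hSopen.mem_nhds h0S)
      have h4 : Tendsto (fun ε : ℝ => ψ (ε * t) * ρ t) (nhdsWithin 0 (Ioi 0))
          (nhds (ψ 0 * ρ t)) := (h3.tendsto.comp h1).mul_const (ρ t)
      apply h4.congr'
      filter_upwards [h2] with ε hε
      rw [Set.indicator_of_mem hε]
  have hfin : (∫ t, ψ 0 * ρ t) = φ x₀ / |deriv g x₀| := by
    rw [integral_const_mul, hρint, mul_one, hψ0]
  rw [← hfin]
  apply hmain.congr'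
  filter_upwards [hloc, self_mem_nhdsWithin] with ε h1 h2
  exact (h1.trans (hsub ε h2)).symm
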